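/- arXiv:2309.10565 — 3 statements merged into one kernel-verified Lean document; each statement's English description precedes it below -/
import Mathlib

section
/- Let n be a natural number and let A, B be positive semidefinite n×n complex matrices. Then the product A*B is diagonalizable: there exist an invertible n×n complex matrix P and a diagonal n×n complex matrix D such that A*B = P * D * P⁻¹. -/
open scoped ComplexOrder

open Polynomial in
private lemma aux_aeval_conj {n : ℕ} (U V M : Matrix (Fin n) (Fin n) ℂ)
    (hUV : U * V = 1) (hVU : V * U = 1) (p : ℂ[X]) :
    aeval (U * M * V) p = U * aeval M p * V := by
  have hpow : ∀ k : ℕ, (U * M * V) ^ k = U * M ^ k * V := by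
    intro k; induction k with
    | zero => simp [hUV]
    | succ k ih =>
      have h1 : V * (U * (M * V)) = M * V := by rw [← mul_assoc, hVU, one_mul]
      rw [pow_succ, ih, pow_succ]
      simp only [mul_assoc, h1]
  induction p using Polynomial.induction_on' with
  | add p q hp hq => simp [hp, hq, Matrix.mul_add, Matrix.add_mul]
  | monomial k a =>
    simp only [aeval_monomial, hpow, ← Algebra.smul_def, Matrix.smul_mul, Matrix.mul_smul]

open Polynomial in
private lemma aux_aeval_X_mul {n : ℕ} (S B K : Matrix (Fin n) (Fin n) ℂ)
    (hK : S * B * S = K) (p : ℂ[X]) :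
    aeval (S * S * B) (X * p) = S * aeval K p * (S * B) := by
  have hpow : ∀ k : ℕ, (S * S * B) ^ (k + 1) = S * K ^ k * (S * B) := by
    intro k; induction k with
    | zero => simp [mul_assoc]
    | succ k ih =>
      rw [pow_succ' (S * S * B) (k+1), ih, pow_succ']
      calc (S * S * B) * (S * K ^ k * (S * B)) = S * (S * B * S * (K ^ k * (S * B))) := by
            simp only [mul_assoc]
        _ = S * (K * K ^ k) * (S * B) := by rw [hK]; simp only [mul_assoc]
  induction p using Polynomial.induction_on' with
  | add p q hp hq => simp only [mul_add, map_add, hp, hq, Matrix.mul_add, Matrix.add_mul]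
  | monomial k a =>
    rw [X_mul_monomial]
    simp only [aeval_monomial, hpow, ← Algebra.smul_def, Matrix.smul_mul, Matrix.mul_smul]

open Polynomial Module in
private lemma aux_diagonalizable_of_squarefree {n : ℕ} (M : Matrix (Fin n) (Fin n) ℂ) (q : ℂ[X])
    (hq : Squarefree q) (h0 : aeval M q = 0) :
    ∃ (P D : Matrix (Fin n) (Fin n) ℂ), IsUnit P ∧ D.IsDiag ∧ M = P * D * P⁻¹ := by
  classical
  set eb := Pi.basisFun ℂ (Fin n) with heb
  set f : Module.End ℂ (Fin n → ℂ) := Matrix.toLin eb eb M with hf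
  have hfa : f = Matrix.toLinAlgEquiv eb M := rfl
  have haf : aeval f q = 0 := by
    rw [hfa, Polynomial.aeval_algHom_apply (Matrix.toLinAlgEquiv eb) M q, h0, map_zero]
  have hss : f.IsSemisimple := Module.End.isSemisimple_of_squarefree_aeval_eq_zero hq haf
  have heig : ∀ μ : ℂ, f.maxGenEigenspace μ = f.eigenspace μ := fun μ =>
    hss.isFinitelySemisimple.maxGenEigenspace_eq_eigenspace μ
  have htop : ⨆ μ : ℂ, f.eigenspace μ = ⊤ := by
    simpa only [heig] using Module.End.iSup_maxGenEigenspace_eq_top f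
  have hind : iSupIndep f.eigenspace := Module.End.eigenspaces_iSupIndep f
  have hInt : DirectSum.IsInternal (fun μ : ℂ => f.eigenspace μ) :=
    DirectSum.isInternal_submodule_of_iSupIndep_of_iSup_eq_top hind htop
  let w : ∀ μ : ℂ, Module.Basis (Module.Basis.ofVectorSpaceIndex ℂ (f.eigenspace μ)) ℂ (f.eigenspace μ) :=
    fun μ => Module.Basis.ofVectorSpace ℂ _
  let b := hInt.collectedBasis w
  haveI : Fintype (Σ μ : ℂ, Basis.ofVectorSpaceIndex ℂ (f.eigenspace μ)) :=
    FiniteDimensional.fintypeBasisIndex b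
  have hcard : Fintype.card (Σ μ : ℂ, Basis.ofVectorSpaceIndex ℂ (f.eigenspace μ)) = n := by
    rw [← Module.finrank_eq_card_basis b, Module.finrank_fin_fun]
  let e := Fintype.equivOfCardEq (hcard.trans (Fintype.card_fin n).symm)
  let v := b.reindex e
  let μ : Fin n → ℂ := fun i => (e.symm i).1
  have hv : ∀ i, f (v i) = μ i • v i := by
    intro i
    have hmem : (b (e.symm i) : Fin n → ℂ) ∈ f.eigenspace (e.symm i).1 :=
      hInt.collectedBasis_mem w (e.symm i)
    have := Module.End.mem_eigenspace_iff.mp hmem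
    simpa [v, Basis.reindex_apply, μ] using this
  have hD : LinearMap.toMatrix v v f = Matrix.diagonal μ := by
    ext i j
    rw [LinearMap.toMatrix_apply, hv j, map_smul, Basis.repr_self]
    by_cases h : i = j
    · subst h; simp
    · simp [Matrix.diagonal_apply_ne _ h, Finsupp.single_apply, Ne.symm h]
  refine ⟨eb.toMatrix v, Matrix.diagonal μ, ?_, Matrix.isDiag_diagonal μ, ?_⟩
  · exact ⟨⟨eb.toMatrix v, v.toMatrix eb, Basis.toMatrix_mul_toMatrix_flip eb v,
      Basis.toMatrix_mul_toMatrix_flip v eb⟩, rfl⟩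
  · have hinv : (eb.toMatrix v)⁻¹ = v.toMatrix eb :=
      Matrix.inv_eq_right_inv (Basis.toMatrix_mul_toMatrix_flip eb v)
    rw [hinv, ← hD, basis_toMatrix_mul_linearMap_toMatrix_mul_basis_toMatrix,
      LinearMap.toMatrix_toLin]

open Polynomial Matrix in
/-- The product of two positive semidefinite complex matrices is diagonalizable:
`A * B = P * D * P⁻¹` for some invertible `P` and diagonal `D`. -/
theorem mul_posSemidef_diagonalizable (n : ℕ) (A B : Matrix (Fin n) (Fin n) ℂ)
    (hA : A.PosSemidef) (hB : B.PosSemidef) :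
    ∃ (P D : Matrix (Fin n) (Fin n) ℂ), IsUnit P ∧ D.IsDiag ∧ A * B = P * D * P⁻¹ := by
  classical
  -- the square root of `A` and the positive semidefinite matrix `K = √A * B * √A`
  open scoped MatrixOrder in set S := CFC.sqrt A with hSdef
  have hS : S.PosSemidef := by open scoped MatrixOrder in exact (CFC.sqrt_nonneg A).posSemidef
  have hSH : Sᴴ = S := hS.1
  have hSS : S * S = A := by open scoped MatrixOrder in exact CFC.sqrt_mul_sqrt_self A hA.nonneg
  set K := S * B * S with hKdef
  have hK : K.PosSemidef := by
    have := hB.mul_mul_conjTranspose_same S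
    rwa [hSH] at this
  -- the annihilating squarefree polynomial
  set s : Finset ℂ := insert 0 (Finset.image (fun i => (hK.1.eigenvalues i : ℂ)) Finset.univ)
    with hsdef
  set q : ℂ[X] := ∏ μ ∈ s, (X - C μ) with hqdef
  have hsq : Squarefree q := by
    refine Polynomial.Separable.squarefree ?_
    exact separable_prod_X_sub_C_iff'.mpr (fun x _ y _ h => h)
  -- `q` annihilates `K` via the spectral theorem
  have hKq : aeval K q = 0 := by
    set U : Matrix (Fin n) (Fin n) ℂ := (hK.1.eigenvectorUnitary : Matrix (Fin n) (Fin n) ℂ) with hUdef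
    have hU1 : U * star U = 1 := mem_unitaryGroup_iff.mp hK.1.eigenvectorUnitary.2
    have hU2 : star U * U = 1 := mem_unitaryGroup_iff'.mp hK.1.eigenvectorUnitary.2
    have hspec : K = U * Matrix.diagonal (RCLike.ofReal ∘ hK.1.eigenvalues) * star U :=
      hK.1.spectral_theorem
    rw [hspec, aux_aeval_conj U (star U) _ hU1 hU2]
    have hdiag : aeval (Matrix.diagonal (RCLike.ofReal ∘ hK.1.eigenvalues) :
        Matrix (Fin n) (Fin n) ℂ) q = 0 := by
      rw [show (Matrix.diagonal (RCLike.ofReal ∘ hK.1.eigenvalues) : Matrix (Fin n) (Fin n) ℂ)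
          = Matrix.diagonalAlgHom ℂ (RCLike.ofReal ∘ hK.1.eigenvalues) from rfl,
        Polynomial.aeval_algHom_apply]
      have : aeval (RCLike.ofReal ∘ hK.1.eigenvalues : Fin n → ℂ) q = 0 := by
        funext i
        have hi2 : (aeval (RCLike.ofReal ∘ hK.1.eigenvalues : Fin n → ℂ) q) i
            = aeval ((RCLike.ofReal ∘ hK.1.eigenvalues : Fin n → ℂ) i) q :=
          (Polynomial.aeval_algHom_apply (Pi.evalAlgHom ℂ (fun _ : Fin n => ℂ) i)
            (RCLike.ofReal ∘ hK.1.eigenvalues) q).symm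
        rw [Pi.zero_apply, hi2, hqdef, map_prod]
        refine Finset.prod_eq_zero (Finset.mem_insert_of_mem
          (Finset.mem_image_of_mem _ (Finset.mem_univ i))) ?_
        simp
      rw [this, map_zero]
    rw [hdiag, Matrix.mul_zero, Matrix.zero_mul]
  -- hence `X * q` annihilates `A * B`
  have hABq : aeval (A * B) (X * q) = 0 := by
    rw [← hSS, aux_aeval_X_mul S B K rfl q, hKq, Matrix.mul_zero, Matrix.zero_mul]
  -- the kernel of `(A*B)^2` equals the kernel of `A*B`
  have hAH : Aᴴ = A := hA.1
  have hBH : Bᴴ = B := hB.1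
  have hker : ∀ x : Fin n → ℂ, (A * B) *ᵥ ((A * B) *ᵥ x) = 0 → (A * B) *ᵥ x = 0 := by
    intro x hx
    simp only [← Matrix.mulVec_mulVec] at hx
    have h1 : B *ᵥ ((A * B) *ᵥ x) = 0 := by
      rw [← hB.dotProduct_mulVec_zero_iff ((A * B) *ᵥ x)]
      rw [star_mulVec, ← Matrix.dotProduct_mulVec]
      simp only [Matrix.conjTranspose_mul, hAH, hBH, ← Matrix.mulVec_mulVec]
      rw [hx]
      simp
    simp only [← Matrix.mulVec_mulVec] at h1
    rw [← Matrix.mulVec_mulVec, ← hA.dotProduct_mulVec_zero_iff (B *ᵥ x),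
      star_mulVec, ← Matrix.dotProduct_mulVec]
    simp only [hBH]
    rw [h1]
    simp
  -- conclude `q` itself annihilates `A * B`
  have h0s : (0 : ℂ) ∈ s := Finset.mem_insert_self 0 _
  set r : ℂ[X] := ∏ μ ∈ s.erase 0, (X - C μ) with hrdef
  have hqr : q = X * r := by
    rw [hqdef, ← Finset.mul_prod_erase s _ h0s, map_zero, sub_zero, hrdef]
  have hMq : aeval (A * B) q = 0 := by
    have h2 : (A * B) * ((A * B) * aeval (A * B) r) = 0 := by
      have := hABq
      rw [hqr, ← mul_assoc, _root_.map_mul, _root_.map_mul, aeval_X, mul_assoc] at this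
      exact this
    rw [← mul_assoc] at h2
    have hz : ∀ x : Fin n → ℂ, ((A * B) * aeval (A * B) r) *ᵥ x = 0 := by
      intro x
      rw [← Matrix.mulVec_mulVec]
      apply hker
      rw [Matrix.mulVec_mulVec, Matrix.mulVec_mulVec, h2, Matrix.zero_mulVec]
    have : (A * B) * aeval (A * B) r = 0 := by
      ext i j
      simpa [Matrix.mulVec_single] using congrFun (hz (Pi.single j 1)) i
    rw [hqr, _root_.map_mul, aeval_X, this]
  exact aux_diagonalizable_of_squarefree (A * B) q hsq hMq
end

section
/- Let n be a natural number and let A, B be positive semidefinite n×n complex matrices. Then every root z of the characteristic polynomial of A*B is a nonnegative real number, i.e., z has imaginary part 0 and real part ≥ 0. -/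
open scoped ComplexOrder
open Matrix

lemma eval_charpoly_aux (n : ℕ) (M : Matrix (Fin n) (Fin n) ℂ) (z : ℂ) :
    M.charpoly.eval z = (Matrix.diagonal (fun _ => z) - M).det := by
  rw [Matrix.charpoly, ← Polynomial.coe_evalRingHom, RingHom.map_det]
  congr 1
  ext i j
  by_cases h : i = j <;>
    simp [Matrix.charmatrix_apply, Matrix.diagonal_apply, h]

/-- Every root of the characteristic polynomial of a product of two positive semidefinite
complex matrices is a nonnegative real number. -/
theorem roots_charpoly_mul_posSemidef_nonneg_real (n : ℕ) (A B : Matrix (Fin n) (Fin n) ℂ)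
    (hA : A.PosSemidef) (hB : B.PosSemidef) :
    ∀ z ∈ (A * B).charpoly.roots, z.im = 0 ∧ 0 ≤ z.re := by
  intro z hz
  have hroot : (A * B).charpoly.eval z = 0 := Polynomial.isRoot_of_mem_roots hz
  rw [eval_charpoly_aux] at hroot
  obtain ⟨v, hv, hveq⟩ := (Matrix.exists_mulVec_eq_zero_iff).mpr hroot
  have hev : (A * B) *ᵥ v = z • v := by
    rw [Matrix.sub_mulVec, sub_eq_zero] at hveq
    rw [← hveq]
    funext i
    simp [Matrix.mulVec_diagonal]
  have h1 : A *ᵥ (B *ᵥ v) = z • v := by rw [Matrix.mulVec_mulVec, hev]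
  set c := star v ⬝ᵥ (B *ᵥ v) with hc
  set d := star (B *ᵥ v) ⬝ᵥ (A *ᵥ (B *ᵥ v)) with hd
  have hc0 : 0 ≤ c := hB.dotProduct_mulVec_nonneg v
  have hd0 : 0 ≤ d := hA.dotProduct_mulVec_nonneg (B *ᵥ v)
  have hdc : d = z * c := by
    rw [hd, h1, Matrix.star_mulVec, hB.isHermitian.eq, dotProduct_smul,
      ← Matrix.dotProduct_mulVec, ← hc, smul_eq_mul]
  by_cases hcz : c = 0
  · have hBv : B *ᵥ v = 0 := (hB.dotProduct_mulVec_zero_iff v).mp hcz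
    have hz0 : z • v = 0 := by rw [← h1, hBv, Matrix.mulVec_zero]
    have : z = 0 := by
      by_contra h
      exact hv (by simpa [h] using congrArg (fun w => z⁻¹ • w) hz0)
    simp [this]
  · rw [Complex.nonneg_iff] at hc0 hd0
    obtain ⟨hcre, hcim⟩ := hc0
    obtain ⟨hdre, hdim⟩ := hd0
    have hcre' : 0 < c.re := by
      rcases lt_or_eq_of_le hcre with h | h
      · exact h
      · exact absurd (by simp [Complex.ext_iff, ← h, hcim]) hcz
    have him : d.im = z.im * c.re + z.re * c.im := by rw [hdc, Complex.mul_im]; ring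
    have hre : d.re = z.re * c.re - z.im * c.im := by rw [hdc, Complex.mul_re]
    rw [← hcim, mul_zero, add_zero] at him
    have hzim : z.im = 0 :=
      (mul_eq_zero.mp (by linarith [hdim ▸ him])).resolve_right hcre'.ne'
    refine ⟨hzim, ?_⟩
    rw [hzim, ← hcim] at hre
    nlinarith
end

section
/- Let n be a natural number and let ρ, σ be positive semidefinite n×n complex matrices (in particular, density matrices, i.e., with trace 1). Let √M denote the unique positive semidefinite square root of a positive semidefinite matrix M. Then the multiset of roots of the characteristic polynomial of √(√ρ · σ · √ρ) equals the image, under the map z ↦ (Real.sqrt (Re z) : ℂ), of the multiset of roots of the characteristic polynomial of ρ · σ. That is, the eigenvalues of the positive square root of √ρ σ √ρ are exactly the square roots of the eigenvalues of ρσ, with multiplicity. -/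
open scoped ComplexOrder

namespace Matrix.PosSemidef

/-- The positive semidefinite square root, as defined in Mathlib of December 2024. -/
noncomputable def sqrt {n : Type*} [Fintype n] [DecidableEq n] {𝕜 : Type*} [RCLike 𝕜]
    {A : Matrix n n 𝕜} (hA : A.PosSemidef) : Matrix n n 𝕜 :=
  hA.1.eigenvectorUnitary.1 * diagonal ((↑) ∘ (√·) ∘ hA.1.eigenvalues) *
    (star hA.1.eigenvectorUnitary : Matrix n n 𝕜)

end Matrix.PosSemidef

/-- `√ρ * σ * √ρ` is positive semidefinite whenever `ρ` and `σ` are. -/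
noncomputable def sandwichPosSemidef {n : ℕ} {ρ σ : Matrix (Fin n) (Fin n) ℂ}
    (hρ : ρ.PosSemidef) (hσ : σ.PosSemidef) :
    (hρ.sqrt * σ * hρ.sqrt).PosSemidef := by
  have h := hσ.conjTranspose_mul_mul_same hρ.sqrt
  have hs : Matrix.conjTranspose hρ.sqrt = hρ.sqrt := by
    simp [Matrix.PosSemidef.sqrt, Matrix.conjTranspose_mul, Matrix.diagonal_conjTranspose,
      Matrix.mul_assoc, Matrix.star_eq_conjTranspose, Pi.star_def, Function.comp_def]
  rwa [hs] at h

open Polynomial Matrix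

variable {n : Type*} [Fintype n] [DecidableEq n] {R : Type*} [CommRing R]

lemma charpoly_conj_aux (P Q M : Matrix n n R) (hPQ : P * Q = 1) :
    (P * M * Q).charpoly = M.charpoly := by
  set P' := (C : R →+* R[X]).mapMatrix P with hP'
  set Q' := (C : R →+* R[X]).mapMatrix Q with hQ'
  have hPQ' : P' * Q' = 1 := by
    rw [hP', hQ', ← _root_.map_mul, hPQ, _root_.map_one]
  have hsc : P' * (Matrix.scalar n (X : R[X])) * Q' = Matrix.scalar n (X : R[X]) := by
    have h1 : (diagonal fun _ : n => (X : R[X])) = (X : R[X]) • (1 : Matrix n n R[X]) := by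
      rw [smul_eq_diagonal_mul, mul_one]
    rw [scalar_apply, h1, mul_smul_comm, smul_mul_assoc, mul_one, hPQ']
  have hcm : charmatrix (P * M * Q) = P' * charmatrix M * Q' := by
    rw [charmatrix, charmatrix, mul_sub, sub_mul, hP', hQ', _root_.map_mul, _root_.map_mul]
    rw [← hP', ← hQ', hsc]
  rw [charpoly, charpoly, hcm, det_mul, det_mul, mul_comm P'.det, mul_assoc, ← det_mul,
    hPQ', det_one, mul_one]

lemma charpoly_mul_comm_of_isUnit {A B : Matrix n n ℂ} (h : IsUnit A.det) :
    (A * B).charpoly = (B * A).charpoly := by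
  have := charpoly_conj_aux A⁻¹ A (A * B) (nonsing_inv_mul A h)
  rw [← mul_assoc A⁻¹ A B, nonsing_inv_mul A h, one_mul] at this
  exact this.symm

lemma eval_det_aux (A : Matrix n n ℂ) (c : ℂ) :
    eval c (Matrix.charpoly (-A)) = (A + c • 1).det := by
  rw [charpoly]
  have hh := RingHom.map_det (evalRingHom c) (charmatrix (-A))
  rw [show eval c ((-A).charmatrix.det) = (evalRingHom c) ((charmatrix (-A)).det) from rfl, hh]
  congr 1
  ext i j
  by_cases hij : i = j <;>
    simp [hij, charmatrix, diagonal, Matrix.one_apply, smul_eq_mul, add_comm]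

lemma charpoly_mul_comm (A B : Matrix n n ℂ) :
    (A * B).charpoly = (B * A).charpoly := by
  classical
  set A' : Matrix n n ℂ[X] := A.map C + (X : ℂ[X]) • 1 with hA'
  set B' : Matrix n n ℂ[X] := B.map C with hB'
  have hmap : ∀ c : ℂ, A'.map (eval c) = A + c • 1 := by
    intro c
    ext i j
    by_cases hij : i = j <;> simp [hA', Matrix.one_apply, hij]
  have hmapB : ∀ c : ℂ, B'.map (eval c) = B := by
    intro c; ext i j; simp [hB']
  have key : (A' * B').charpoly = (B' * A').charpoly := by
    refine Polynomial.ext fun k => ?_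
    apply Polynomial.eq_of_infinite_eval_eq
    have hfin : Set.Finite {c : ℂ | ¬ IsUnit (A + c • 1).det} := by
      apply Set.Finite.subset (Polynomial.finite_setOf_isRoot
        (p := Matrix.charpoly (-A)) (Matrix.charpoly_monic _).ne_zero)
      intro c hc
      simp only [Set.mem_setOf_eq, isUnit_iff_ne_zero, not_not] at hc
      simp [Polynomial.IsRoot, eval_det_aux, hc]
    have hinf : Set.Infinite {c : ℂ | IsUnit (A + c • 1).det} := by
      have h2 := hfin.infinite_compl
      rwa [show {c : ℂ | ¬ IsUnit (A + c • 1).det}ᶜ = {c : ℂ | IsUnit (A + c • 1).det} from by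
        ext c; simp] at h2
    apply hinf.mono
    intro c hc
    have h1 : ((A' * B').charpoly.coeff k).eval c =
        (((A' * B').map (evalRingHom c)).charpoly).coeff k := by
      rw [Matrix.charpoly_map, Polynomial.coeff_map]; rfl
    have h2 : ((B' * A').charpoly.coeff k).eval c =
        (((B' * A').map (evalRingHom c)).charpoly).coeff k := by
      rw [Matrix.charpoly_map, Polynomial.coeff_map]; rfl
    have e1 : (A' * B').map (evalRingHom c) = (A + c • 1) * B := by
      rw [Matrix.map_mul]; rw [show ⇑(evalRingHom c) = eval c from rfl, hmap, hmapB]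
    have e2 : (B' * A').map (evalRingHom c) = B * (A + c • 1) := by
      rw [Matrix.map_mul]; rw [show ⇑(evalRingHom c) = eval c from rfl, hmap, hmapB]
    simp only [Set.mem_setOf_eq] at hc ⊢
    rw [h1, h2, e1, e2, charpoly_mul_comm_of_isUnit hc]
  have fin1 : A * B = (A' * B').map (evalRingHom 0) := by
    rw [Matrix.map_mul, show ⇑(evalRingHom (0:ℂ)) = eval 0 from rfl, hmap, hmapB]; simp
  have fin2 : B * A = (B' * A').map (evalRingHom 0) := by
    rw [Matrix.map_mul, show ⇑(evalRingHom (0:ℂ)) = eval 0 from rfl, hmap, hmapB]; simp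
  rw [fin1, fin2, Matrix.charpoly_map, Matrix.charpoly_map, key]

lemma charpoly_diagonal_roots (d : n → ℂ) :
    (Matrix.diagonal d).charpoly.roots = Finset.univ.val.map d := by
  have h1 : charmatrix (diagonal d) = diagonal (fun i => (X : ℂ[X]) - C (d i)) := by
    ext i j; by_cases hij : i = j <;> simp [charmatrix, diagonal, hij]
  rw [charpoly, h1, det_diagonal]
  have h2 := Polynomial.roots_multiset_prod_X_sub_C (Finset.univ.val.map d)
  rw [Multiset.map_map] at h2
  exact h2

lemma herm_roots {M : Matrix n n ℂ} (hM : M.IsHermitian) :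
    M.charpoly.roots = Finset.univ.val.map (fun i => (hM.eigenvalues i : ℂ)) := by
  have hU : (hM.eigenvectorUnitary : Matrix n n ℂ) * star (hM.eigenvectorUnitary : Matrix n n ℂ)
      = 1 := (Matrix.mem_unitaryGroup_iff).mp hM.eigenvectorUnitary.2
  conv_lhs => rw [hM.spectral_theorem, Unitary.conjStarAlgAut_apply]
  rw [charpoly_conj_aux _ _ _ hU, charpoly_diagonal_roots]
  rfl

lemma sqrt_roots {M : Matrix n n ℂ} (hM : M.PosSemidef) :
    hM.sqrt.charpoly.roots =
      Finset.univ.val.map (fun i => ((Real.sqrt (hM.1.eigenvalues i) : ℝ) : ℂ)) := by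
  have hU : (hM.1.eigenvectorUnitary : Matrix n n ℂ)
      * star (hM.1.eigenvectorUnitary : Matrix n n ℂ) = 1 :=
    (Matrix.mem_unitaryGroup_iff).mp hM.1.eigenvectorUnitary.2
  have hdef : hM.sqrt = (hM.1.eigenvectorUnitary : Matrix n n ℂ)
      * diagonal ((↑) ∘ Real.sqrt ∘ hM.1.eigenvalues)
      * star (hM.1.eigenvectorUnitary : Matrix n n ℂ) := rfl
  rw [hdef, charpoly_conj_aux _ _ _ hU, charpoly_diagonal_roots]
  rfl

lemma sqrt_mul_self_aux {M : Matrix n n ℂ} (hM : M.PosSemidef) : hM.sqrt * hM.sqrt = M := by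
  have hU' : star (hM.1.eigenvectorUnitary : Matrix n n ℂ)
      * (hM.1.eigenvectorUnitary : Matrix n n ℂ) = 1 :=
    (Matrix.mem_unitaryGroup_iff').mp hM.1.eigenvectorUnitary.2
  unfold Matrix.PosSemidef.sqrt
  set U := (hM.1.eigenvectorUnitary : Matrix n n ℂ)
  set D := diagonal ((RCLike.ofReal : ℝ → ℂ) ∘ (√·) ∘ hM.1.eigenvalues)
  rw [show U * D * star U * (U * D * star U) = U * D * (star U * U) * D * star U by
    simp only [Matrix.mul_assoc]]
  rw [hU', Matrix.mul_one, Matrix.mul_assoc U D D, diagonal_mul_diagonal]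
  conv_rhs => rw [hM.1.spectral_theorem, Unitary.conjStarAlgAut_apply]
  congr 3
  funext i
  simp only [Function.comp_apply]
  rw [← RCLike.ofReal_mul, Real.mul_self_sqrt (hM.eigenvalues_nonneg i)]

/-- The eigenvalues (roots of the characteristic polynomial, with multiplicity) of the positive
semidefinite square root of `√ρ * σ * √ρ` are exactly the square roots of the eigenvalues of
`ρ * σ`, for positive semidefinite `ρ`, `σ`. -/
theorem roots_sqrt_sandwich_eq_sqrt_roots_mul (n : ℕ) (ρ σ : Matrix (Fin n) (Fin n) ℂ)
    (hρ : ρ.PosSemidef) (hσ : σ.PosSemidef) :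
    (sandwichPosSemidef hρ hσ).sqrt.charpoly.roots =
      ((ρ * σ).charpoly.roots).map (fun z => (Real.sqrt z.re : ℂ)) := by
  have hchar : (ρ * σ).charpoly = (hρ.sqrt * σ * hρ.sqrt).charpoly := by
    have h := _root_.charpoly_mul_comm (hρ.sqrt * σ) hρ.sqrt
    rw [← Matrix.mul_assoc hρ.sqrt hρ.sqrt σ, sqrt_mul_self_aux hρ] at h
    exact h.symm
  rw [sqrt_roots (sandwichPosSemidef hρ hσ), hchar,
    herm_roots (sandwichPosSemidef hρ hσ).1, Multiset.map_map]
  congr 1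
end
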